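/- For every 0 < p ≤ 1 and every C > 0 there exists a constant K = K(C, p) > 0 such that: whenever X is a p-Banach space over 𝔽 = ℂ and 𝒳 is a basis of X that is C-URGPCC, the basis 𝒳 is K-unconditional. -/

import Mathlib

open scoped BigOperators

noncomputable section

/-- A basis of a `p`-Banach space over `𝕜` (`𝕜 = ℝ` or `ℂ`), bundled with the `p`-norm
`N`, the basis vectors `e`, and the biorthogonal functionals `coord`. -/
structure PBasis (𝕜 : Type*) [RCLike 𝕜] (X : Type*) [AddCommGroup X] [Module 𝕜 X]
    (p : ℝ) : Type _ where
  /-- the `p`-norm of the space -/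
  N : X → ℝ
  N_nonneg : ∀ f : X, 0 ≤ N f
  N_eq_zero_iff : ∀ f : X, N f = 0 ↔ f = 0
  N_smul : ∀ (t : 𝕜) (f : X), N (t • f) = ‖t‖ * N f
  N_padd : ∀ f g : X, N (f + g) ^ p ≤ N f ^ p + N g ^ p
  /-- completeness with respect to the `p`-norm -/
  complete : ∀ u : ℕ → X,
      (∀ ε : ℝ, 0 < ε → ∃ n₀ : ℕ, ∀ m n : ℕ, n₀ ≤ m → n₀ ≤ n → N (u m - u n) < ε) →
      ∃ f : X, ∀ ε : ℝ, 0 < ε → ∃ n₀ : ℕ, ∀ n : ℕ, n₀ ≤ n → N (u n - f) < ε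
  /-- the basis vectors -/
  e : ℕ → X
  /-- the biorthogonal functionals -/
  coord : ℕ → X →ₗ[𝕜] 𝕜
  biorth : ∀ n m : ℕ, coord n (e m) = if n = m then (1 : 𝕜) else 0
  /-- the closed linear span of the basis vectors is the whole space -/
  dense_span : ∀ f : X, ∀ ε : ℝ, 0 < ε →
      ∃ g ∈ Submodule.span 𝕜 (Set.range e), N (f - g) < ε
  e_bdd : ∃ c : ℝ, ∀ n : ℕ, N (e n) ≤ c
  coord_bdd : ∃ c : ℝ, ∀ (n : ℕ) (f : X), ‖coord n f‖ ≤ c * N f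

namespace PBasis

variable {𝕜 : Type*} [RCLike 𝕜] {X : Type*} [AddCommGroup X] [Module 𝕜 X] {p : ℝ}

/-- The projection `P_A f = ∑_{n ∈ A} x_n^*(f) x_n`. -/
def proj (bs : PBasis 𝕜 X p) (A : Finset ℕ) (f : X) : X :=
  ∑ n ∈ A, bs.coord n f • bs.e n

/-- The support of `f`. -/
def supp (bs : PBasis 𝕜 X p) (f : X) : Set ℕ := {n | bs.coord n f ≠ 0}

/-- `A` is a greedy set of `f`: `min_{n ∈ A} |x_n^*(f)| ≥ max_{m ∉ A} |x_m^*(f)|`. -/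
def IsGreedySet (bs : PBasis 𝕜 X p) (f : X) (A : Finset ℕ) : Prop :=
  ∀ n ∈ A, ∀ m : ℕ, m ∉ A → ‖bs.coord m f‖ ≤ ‖bs.coord n f‖

/-- `𝟙_{ε,A} = ∑_{j ∈ A} ε_j x_j`. -/
def indSign (bs : PBasis 𝕜 X p) (ε : ℕ → 𝕜) (A : Finset ℕ) : X :=
  ∑ j ∈ A, ε j • bs.e j

/-- `𝟙_A = ∑_{j ∈ A} x_j`. -/
def ind (bs : PBasis 𝕜 X p) (A : Finset ℕ) : X := ∑ j ∈ A, bs.e j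

/-- `ε` is a sign on `A`. -/
def IsSign (ε : ℕ → 𝕜) (A : Finset ℕ) : Prop := ∀ j ∈ A, ‖ε j‖ = 1

/-- `min_{n ∈ A} |x_n^*(f)|`. -/
def minCoef (bs : PBasis 𝕜 X p) (f : X) (A : Finset ℕ) : ℝ :=
  sInf ((fun n => ‖bs.coord n f‖) '' (A : Set ℕ))

/-- `‖f − P_A(f)‖ ≤ C·σ_m(f)` for every greedy set `A` of cardinality `m`. -/
def IsGreedyWith (bs : PBasis 𝕜 X p) (C : ℝ) : Prop :=
  ∀ (f : X) (A B : Finset ℕ) (a : ℕ → 𝕜), bs.IsGreedySet f A → B.card ≤ A.card →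
    bs.N (f - bs.proj A f) ≤ C * bs.N (f - ∑ j ∈ B, a j • bs.e j)

/-- `‖f − P_A(f)‖ ≤ C·ρ_m(f)` for every greedy set `A` of cardinality `m`, where
`ρ_m(f) = inf {‖f − α 𝟙_{ε,B}‖ : |B| = m, ε sign}` and `α = min_{n ∈ A} |x_n^*(f)|`. -/
def IsRGPCCWith (bs : PBasis 𝕜 X p) (C : ℝ) : Prop :=
  ∀ (f : X) (A B : Finset ℕ) (ε : ℕ → 𝕜), bs.IsGreedySet f A → B.card = A.card →
    IsSign ε B →
    bs.N (f - bs.proj A f) ≤ C * bs.N (f - ((bs.minCoef f A : ℝ) : 𝕜) • bs.indSign ε B)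

/-- `‖f − P_A(f)‖ ≤ C·ϱ_m(f)` for every greedy set `A` of cardinality `m`, where
`ϱ_m(f) = inf {‖f − α 𝟙_B‖ : |B| = m}` and `α = min_{n ∈ A} |x_n^*(f)|`. -/
def IsURGPCCWith (bs : PBasis 𝕜 X p) (C : ℝ) : Prop :=
  ∀ (f : X) (A B : Finset ℕ), bs.IsGreedySet f A → B.card = A.card →
    bs.N (f - bs.proj A f) ≤ C * bs.N (f - ((bs.minCoef f A : ℝ) : 𝕜) • bs.ind B)

/-- `K`-unconditionality. -/
def IsUncondWith (bs : PBasis 𝕜 X p) (K : ℝ) : Prop :=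
  ∀ (A : Finset ℕ) (f : X), bs.N (bs.proj A f) ≤ K * bs.N f

/-- `C`-quasi-greediness. -/
def IsQuasiGreedyWith (bs : PBasis 𝕜 X p) (C : ℝ) : Prop :=
  ∀ (f : X) (A : Finset ℕ), bs.IsGreedySet f A → bs.N (f - bs.proj A f) ≤ C * bs.N f

/-- `C`-almost-greediness. -/
def IsAlmostGreedyWith (bs : PBasis 𝕜 X p) (C : ℝ) : Prop :=
  ∀ (f : X) (A B : Finset ℕ), bs.IsGreedySet f A → B.card ≤ A.card →
    bs.N (f - bs.proj A f) ≤ C * bs.N (f - bs.proj B f)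

/-- `D`-democracy. -/
def IsDemocraticWith (bs : PBasis 𝕜 X p) (D : ℝ) : Prop :=
  ∀ A B : Finset ℕ, A.card ≤ B.card → bs.N (bs.ind A) ≤ D * bs.N (bs.ind B)

/-- `D`-superdemocracy. -/
def IsSuperdemocraticWith (bs : PBasis 𝕜 X p) (D : ℝ) : Prop :=
  ∀ (A B : Finset ℕ) (ε η : ℕ → 𝕜), A.card ≤ B.card → IsSign ε A → IsSign η B →
    bs.N (bs.indSign ε A) ≤ D * bs.N (bs.indSign η B)

/-- `A < B`, i.e. every element of `A` is smaller than every element of `B`. -/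
def FinsetBefore (A B : Finset ℕ) : Prop := ∀ a ∈ A, ∀ b ∈ B, a < b

open scoped Classical in
/-- `sgn z = z/|z|` (with the convention `sgn 0 = 1`). -/
def sgn (z : 𝕜) : 𝕜 := if z = 0 then 1 else z / ((‖z‖ : ℝ) : 𝕜)

end PBasis

namespace PBasis

variable {X : Type*} [AddCommGroup X] [Module ℂ X] {p : ℝ}

theorem aux_rpow_le {a b q : ℝ} (hq : 0 < q) (ha : 0 ≤ a) (hb : 0 ≤ b)
    (h : a ^ q ≤ b ^ q) : a ≤ b := by
  have h2 := Real.rpow_le_rpow (Real.rpow_nonneg ha q) h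
    (le_of_lt (by positivity : (0:ℝ) < 1/q))
  rwa [← Real.rpow_mul ha, ← Real.rpow_mul hb, mul_one_div, div_self hq.ne',
    Real.rpow_one, Real.rpow_one] at h2

theorem aux_coord_ind (bs : PBasis ℂ X p) (E : Finset ℕ) (m : ℕ) :
    bs.coord m (bs.ind E) = if m ∈ E then 1 else 0 := by
  classical
  unfold PBasis.ind
  rw [map_sum]
  simp only [bs.biorth]
  exact Finset.sum_ite_eq E m (fun _ => (1:ℂ))

theorem aux_coord_proj (bs : PBasis ℂ X p) (B : Finset ℕ) (f : X) (m : ℕ) :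
    bs.coord m (bs.proj B f) = if m ∈ B then bs.coord m f else 0 := by
  classical
  unfold PBasis.proj
  rw [map_sum]
  simp only [map_smul, bs.biorth, smul_eq_mul, mul_ite, mul_one, mul_zero]
  exact Finset.sum_ite_eq B m (fun j => bs.coord j f)

theorem aux_N_neg (bs : PBasis ℂ X p) (x : X) : bs.N (-x) = bs.N x := by
  have h := bs.N_smul (-1 : ℂ) x
  simpa [neg_one_smul] using h

theorem aux_N_zero (bs : PBasis ℂ X p) : bs.N 0 = 0 := (bs.N_eq_zero_iff 0).mpr rfl

theorem aux_sum_rpow (bs : PBasis ℂ X p) (hp : 0 < p) (s : Finset ℕ) (x : ℕ → X) :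
    bs.N (∑ j ∈ s, x j) ^ p ≤ ∑ j ∈ s, bs.N (x j) ^ p := by
  classical
  induction s using Finset.cons_induction with
  | empty => simp [aux_N_zero, Real.zero_rpow hp.ne']
  | cons a s ha ih =>
    rw [Finset.sum_cons, Finset.sum_cons]
    exact (bs.N_padd _ _).trans (add_le_add le_rfl ih)

theorem aux_exists_small (bs : PBasis ℂ X p) (f : X) (A : Finset ℕ) {ε : ℝ}
    (hε : 0 < ε) : ∃ d, d ∉ A ∧ ‖bs.coord d f‖ ≤ ε := by
  classical
  obtain ⟨c, hc⟩ := bs.coord_bdd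
  set c' := max c 0 with hc'def
  have hc'0 : 0 ≤ c' := le_max_right c 0
  have hε' : 0 < ε / (c' + 1) := by positivity
  obtain ⟨g₀, hg₀mem, hg₀⟩ := bs.dense_span f _ hε'
  obtain ⟨w, hw⟩ := Finsupp.mem_span_range_iff_exists_finsupp.mp hg₀mem
  obtain ⟨d, hd⟩ := Infinite.exists_notMem_finset (A ∪ w.support)
  refine ⟨d, fun h => hd (Finset.mem_union_left _ h), ?_⟩
  have hdg : bs.coord d g₀ = 0 := by
    rw [← hw, map_finsuppSum]
    rw [Finsupp.sum]
    apply Finset.sum_eq_zero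
    intro i hi
    have hdi : d ≠ i := fun h => hd (Finset.mem_union_right _ (h ▸ hi))
    rw [map_smul, bs.biorth, if_neg hdi, smul_zero]
  have heq : bs.coord d f = bs.coord d (f - g₀) := by rw [map_sub, hdg, sub_zero]
  rw [heq]
  have h1 : ‖bs.coord d (f - g₀)‖ ≤ c * bs.N (f - g₀) := hc d _
  have h2 : c * bs.N (f - g₀) ≤ c' * (ε / (c' + 1)) :=
    mul_le_mul (le_max_left c 0) hg₀.le (bs.N_nonneg _) hc'0
  have h3 : c' * (ε / (c' + 1)) ≤ ε := by
    rw [div_eq_inv_mul, ← mul_assoc]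
    have : c' * (c' + 1)⁻¹ ≤ 1 := by
      rw [mul_inv_le_iff₀ (by positivity), one_mul]; linarith
    nlinarith
  linarith

theorem aux_stepA {C : ℝ} (bs : PBasis ℂ X p) (hp : 0 < p) (hC : 0 < C)
    (hU : bs.IsURGPCCWith C) (f : X) (A : Finset ℕ)
    (hA : ∀ n ∈ A, 0 ≤ (bs.coord n f).re) :
    bs.N (f - bs.proj A f) ≤ C * bs.N f := by
  classical
  obtain ⟨c, hc⟩ := bs.coord_bdd
  obtain ⟨ce, hce⟩ := bs.e_bdd
  have hce0 : 0 ≤ ce := (bs.N_nonneg (bs.e 0)).trans (hce 0)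
  set μ := c * bs.N f with hμdef
  have hμ0 : 0 ≤ μ := (norm_nonneg _).trans (hc 0 f)
  have hμ : ∀ m, ‖bs.coord m f‖ ≤ μ := fun m => hc m f
  set D := C ^ p * (((A.card : ℝ) + 1) * ce ^ p) + ce ^ p with hDdef
  have hD0 : 0 ≤ D := by
    have h1 : (0:ℝ) ≤ C ^ p := Real.rpow_nonneg hC.le p
    have h2 : (0:ℝ) ≤ ce ^ p := Real.rpow_nonneg hce0 p
    have h3 : (0:ℝ) ≤ (A.card : ℝ) + 1 := by positivity
    rw [hDdef]
    positivity
  have hD1 : (0:ℝ) < D + 1 := by linarith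
  apply aux_rpow_le hp (bs.N_nonneg _) (mul_nonneg hC.le (bs.N_nonneg f))
  apply le_of_forall_pos_le_add
  intro δ hδ
  set ε := (δ / (D + 1)) ^ (1/p) with hεdef
  have hε : 0 < ε := Real.rpow_pos_of_pos (div_pos hδ hD1) _
  have hεp : ε ^ p = δ / (D + 1) := by
    rw [hεdef, ← Real.rpow_mul (div_nonneg hδ.le hD1.le), one_div,
      inv_mul_cancel₀ hp.ne', Real.rpow_one]
  obtain ⟨d, hdA, hd⟩ := aux_exists_small bs f A hε
  set E := insert d A with hEdef
  have hdE : d ∈ E := Finset.mem_insert_self d A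
  set β := μ + ε with hβdef
  have hβ0 : 0 ≤ β := by linarith
  set g := f + ((β : ℝ) : ℂ) • bs.ind E with hgdef
  have hgcoord : ∀ m, bs.coord m g = bs.coord m f + (if m ∈ E then ((β:ℝ):ℂ) else 0) := by
    intro m
    rw [hgdef, map_add, map_smul, aux_coord_ind]
    simp [smul_eq_mul, mul_ite]
  have hnormβ : ‖((β:ℝ):ℂ)‖ = β := by simp [abs_of_nonneg hβ0]
  have hlow : ∀ n ∈ E, β - ε ≤ ‖bs.coord n g‖ := by
    intro n hn
    rw [hgcoord n, if_pos hn]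
    rcases Finset.mem_insert.mp hn with h | h
    · subst h
      have h2 : ‖((β:ℝ):ℂ)‖ ≤ ‖bs.coord n f + ((β:ℝ):ℂ)‖ + ‖bs.coord n f‖ := by
        calc ‖((β:ℝ):ℂ)‖ = ‖(bs.coord n f + ((β:ℝ):ℂ)) - bs.coord n f‖ := by ring_nf
          _ ≤ _ := norm_sub_le _ _
      rw [hnormβ] at h2
      linarith
    · have h1 : (β:ℝ) ≤ (bs.coord n f + ((β:ℝ):ℂ)).re := by
        simp only [Complex.add_re, Complex.ofReal_re]
        linarith [hA n h]
      have h2 := Complex.re_le_norm (bs.coord n f + ((β:ℝ):ℂ))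
      linarith
  have hgreedy : bs.IsGreedySet g E := by
    intro n hn m hm
    have h1 : bs.coord m g = bs.coord m f := by rw [hgcoord m, if_neg hm, add_zero]
    rw [h1]
    exact (hμ m).trans (le_trans (by linarith : μ ≤ β - ε) (hlow n hn))
  set β' := bs.minCoef g E with hβ'def
  have hβ'low : β - ε ≤ β' := by
    apply le_csInf
    · exact ⟨‖bs.coord d g‖, ⟨d, Finset.mem_coe.mpr hdE, rfl⟩⟩
    · rintro x ⟨n, hn, rfl⟩
      exact hlow n (Finset.mem_coe.mp hn)
  have hβ'up : β' ≤ β + ε := by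
    have hbd : BddBelow ((fun n => ‖bs.coord n g‖) '' (E : Set ℕ)) := by
      refine ⟨0, ?_⟩
      rintro x ⟨n, hn, rfl⟩
      exact norm_nonneg _
    refine (csInf_le hbd ⟨d, Finset.mem_coe.mpr hdE, rfl⟩).trans ?_
    show ‖bs.coord d g‖ ≤ β + ε
    rw [hgcoord d, if_pos hdE]
    calc ‖bs.coord d f + ((β:ℝ):ℂ)‖ ≤ ‖bs.coord d f‖ + ‖((β:ℝ):ℂ)‖ := norm_add_le _ _
      _ ≤ β + ε := by rw [hnormβ]; linarith
  have hkey := hU g E E hgreedy rfl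
  have hid1 : g - bs.proj E g = f - bs.proj E f := by
    have hpe : bs.proj E g = bs.proj E f + ((β:ℝ):ℂ) • bs.ind E := by
      unfold PBasis.proj PBasis.ind
      rw [Finset.smul_sum, ← Finset.sum_add_distrib]
      refine Finset.sum_congr rfl fun n hn => ?_
      rw [hgcoord n, if_pos hn, add_smul]
    rw [hgdef, hpe]; abel
  have hid2 : g - ((β' : ℝ) : ℂ) • bs.ind E = f + (((β - β' : ℝ)) : ℂ) • bs.ind E := by
    rw [hgdef, Complex.ofReal_sub, sub_smul]; abel
  simp only [show ∀ x : ℝ, (@RCLike.ofReal ℂ _ x) = ((x : ℝ) : ℂ) from fun _ => rfl] at hkey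
  rw [← hβ'def] at hkey
  rw [hid1, hid2] at hkey
  -- bounds
  have hγ : |β - β'| ≤ ε := abs_le.mpr ⟨by linarith, by linarith⟩
  have hindE : bs.N (bs.ind E) ^ p ≤ ((A.card : ℝ) + 1) * ce ^ p := by
    have h1 := aux_sum_rpow bs hp E (fun j => bs.e j)
    refine le_trans (by exact h1) ?_
    calc ∑ j ∈ E, bs.N (bs.e j) ^ p ≤ ∑ _j ∈ E, ce ^ p :=
          Finset.sum_le_sum fun j _ => Real.rpow_le_rpow (bs.N_nonneg _) (hce j) hp.le
      _ = (E.card : ℝ) * ce ^ p := by rw [Finset.sum_const, nsmul_eq_mul]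
      _ = ((A.card : ℝ) + 1) * ce ^ p := by
          rw [hEdef, Finset.card_insert_of_notMem hdA]; push_cast; ring
  have hsmul : bs.N (((β - β' : ℝ) : ℂ) • bs.ind E) ^ p ≤ ε ^ p * (((A.card : ℝ) + 1) * ce ^ p) := by
    have h1 : bs.N (((β - β' : ℝ) : ℂ) • bs.ind E) ≤ ε * bs.N (bs.ind E) := by
      rw [bs.N_smul]
      apply mul_le_mul_of_nonneg_right _ (bs.N_nonneg _)
      calc ‖((β - β' : ℝ):ℂ)‖ = |β - β'| := by
            rw [Complex.norm_real, Real.norm_eq_abs]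
        _ ≤ ε := hγ
    calc bs.N (((β - β' : ℝ) : ℂ) • bs.ind E) ^ p ≤ (ε * bs.N (bs.ind E)) ^ p :=
          Real.rpow_le_rpow (bs.N_nonneg _) h1 hp.le
      _ = ε ^ p * bs.N (bs.ind E) ^ p := Real.mul_rpow hε.le (bs.N_nonneg _)
      _ ≤ ε ^ p * (((A.card : ℝ) + 1) * ce ^ p) :=
          mul_le_mul_of_nonneg_left hindE (Real.rpow_nonneg hε.le p)
  have hchain2 : bs.N (f - bs.proj E f) ^ p ≤
      C ^ p * (bs.N f ^ p + ε ^ p * (((A.card : ℝ) + 1) * ce ^ p)) := by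
    have h7 := Real.rpow_le_rpow (bs.N_nonneg _) hkey hp.le
    rw [Real.mul_rpow hC.le (bs.N_nonneg _)] at h7
    refine h7.trans ?_
    apply mul_le_mul_of_nonneg_left _ (Real.rpow_nonneg hC.le p)
    exact (bs.N_padd f _).trans (add_le_add le_rfl hsmul)
  have hchain1 : bs.N (f - bs.proj A f) ^ p ≤ bs.N (f - bs.proj E f) ^ p + ε ^ p * ce ^ p := by
    have heq : f - bs.proj A f = (f - bs.proj E f) + bs.coord d f • bs.e d := by
      unfold PBasis.proj
      rw [hEdef, Finset.sum_insert hdA]; abel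
    rw [heq]
    refine (bs.N_padd _ _).trans ?_
    have h1 : bs.N (bs.coord d f • bs.e d) ≤ ε * ce := by
      rw [bs.N_smul]
      exact mul_le_mul hd (hce d) (bs.N_nonneg _) hε.le
    have h2 : bs.N (bs.coord d f • bs.e d) ^ p ≤ ε ^ p * ce ^ p := by
      calc bs.N (bs.coord d f • bs.e d) ^ p ≤ (ε * ce) ^ p :=
            Real.rpow_le_rpow (bs.N_nonneg _) h1 hp.le
        _ = ε ^ p * ce ^ p := Real.mul_rpow hε.le hce0
    linarith
  have hεD : ε ^ p * D ≤ δ := by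
    rw [hεp]
    calc δ / (D + 1) * D ≤ δ / (D + 1) * (D + 1) :=
          mul_le_mul_of_nonneg_left (by linarith) (div_nonneg hδ.le hD1.le)
      _ = δ := div_mul_cancel₀ δ hD1.ne'
  have hfinal : (C * bs.N f) ^ p = C ^ p * bs.N f ^ p := Real.mul_rpow hC.le (bs.N_nonneg _)
  rw [hfinal]
  have hCp : 0 ≤ C ^ p := Real.rpow_nonneg hC.le p
  have hx : ε ^ p * D = C ^ p * (ε ^ p * (((A.card : ℝ) + 1) * ce ^ p)) + ε ^ p * ce ^ p := by
    rw [hDdef]; ring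
  linarith [hchain1, hchain2, hεD]

theorem aux_stepB {C : ℝ} (bs : PBasis ℂ X p) (hp : 0 < p) (hC : 0 < C)
    (hU : bs.IsURGPCCWith C) (f : X) (A : Finset ℕ) :
    bs.N (f - bs.proj A f) ≤ C * (C * bs.N f) := by
  classical
  set A₁ := A.filter (fun n => (bs.coord n f).re < 0) with hA₁def
  set A₂ := A.filter (fun n => ¬ (bs.coord n f).re < 0) with hA₂def
  set f₁ := f - bs.proj A₁ f with hf₁def
  have h1 : bs.N f₁ ≤ C * bs.N f := by
    have hneg : ∀ n ∈ A₁, 0 ≤ (bs.coord n (-f)).re := by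
      intro n hn
      have := (Finset.mem_filter.mp hn).2
      rw [map_neg, Complex.neg_re]
      linarith
    have h2 := aux_stepA bs hp hC hU (-f) A₁ hneg
    have h3 : (-f) - bs.proj A₁ (-f) = -(f - bs.proj A₁ f) := by
      have hpn : bs.proj A₁ (-f) = -(bs.proj A₁ f) := by
        unfold PBasis.proj
        rw [← Finset.sum_neg_distrib]
        refine Finset.sum_congr rfl fun n _ => ?_
        rw [map_neg, neg_smul]
      rw [hpn]; abel
    rw [h3, aux_N_neg, aux_N_neg] at h2
    exact h2
  have hcoordf₁ : ∀ n ∈ A₂, bs.coord n f₁ = bs.coord n f := by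
    intro n hn
    have hn1 : n ∉ A₁ := by
      intro h
      exact (Finset.mem_filter.mp hn).2 (Finset.mem_filter.mp h).2
    rw [hf₁def, map_sub, aux_coord_proj, if_neg hn1, sub_zero]
  have h4 : ∀ n ∈ A₂, 0 ≤ (bs.coord n f₁).re := by
    intro n hn
    rw [hcoordf₁ n hn]
    exact not_lt.mp (Finset.mem_filter.mp hn).2
  have h5 := aux_stepA bs hp hC hU f₁ A₂ h4
  have h6 : f₁ - bs.proj A₂ f₁ = f - bs.proj A f := by
    have hpr : bs.proj A₂ f₁ = bs.proj A₂ f := by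
      unfold PBasis.proj
      exact Finset.sum_congr rfl fun n hn => by rw [hcoordf₁ n hn]
    have hsplit : bs.proj A f = bs.proj A₁ f + bs.proj A₂ f := by
      unfold PBasis.proj
      rw [hA₁def, hA₂def]
      exact (Finset.sum_filter_add_sum_filter_not A _ _).symm
    rw [hpr, hf₁def, hsplit]; abel
  rw [h6] at h5
  calc bs.N (f - bs.proj A f) ≤ C * bs.N f₁ := h5
    _ ≤ C * (C * bs.N f) := mul_le_mul_of_nonneg_left h1 hC.le

end PBasis

/-- For every `0 < p ≤ 1` and `C > 0` there is `K = K(C,p) > 0` such that every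
`C`-URGPCC basis of a `p`-Banach space over `ℂ` is `K`-unconditional. -/
theorem URGPCC_implies_unconditional_complex (p C : ℝ) (hp : 0 < p) (hp1 : p ≤ 1)
    (hC : 0 < C) :
    ∃ K : ℝ, 0 < K ∧
      ∀ (X : Type*) [AddCommGroup X] [Module ℂ X] (bs : PBasis ℂ X p),
        bs.IsURGPCCWith C → bs.IsUncondWith K := by
  refine ⟨(1 + (C * C) ^ p) ^ (1/p), Real.rpow_pos_of_pos (by positivity) _, ?_⟩
  intro X _ _ bs hU A f
  have hsup := PBasis.aux_stepB bs hp hC hU f A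
  have hpadd : bs.N (bs.proj A f) ^ p ≤ bs.N f ^ p + bs.N (f - bs.proj A f) ^ p := by
    have h0 := bs.N_padd f (-(f - bs.proj A f))
    rw [PBasis.aux_N_neg] at h0
    have heq2 : f + -(f - bs.proj A f) = bs.proj A f := by abel
    rwa [heq2] at h0
  have h2 : bs.N (f - bs.proj A f) ^ p ≤ (C * C) ^ p * bs.N f ^ p := by
    calc bs.N (f - bs.proj A f) ^ p ≤ (C * (C * bs.N f)) ^ p :=
          Real.rpow_le_rpow (bs.N_nonneg _) hsup hp.le
      _ = (C * C) ^ p * bs.N f ^ p := by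
          rw [← mul_assoc, Real.mul_rpow (by positivity) (bs.N_nonneg _)]
  apply PBasis.aux_rpow_le hp (bs.N_nonneg _)
    (mul_nonneg (Real.rpow_nonneg (by positivity) _) (bs.N_nonneg f))
  have hK : ((1 + (C * C) ^ p) ^ (1/p) * bs.N f) ^ p = (1 + (C * C) ^ p) * bs.N f ^ p := by
    rw [Real.mul_rpow (by positivity) (bs.N_nonneg _), ← Real.rpow_mul (by positivity),
      one_div, inv_mul_cancel₀ hp.ne', Real.rpow_one]
  rw [hK]
  nlinarith [hpadd, h2]
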